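/- Let P, Q be probability distributions on ℝ with everywhere positive continuous densities f_X, f_Y and CDFs F_X, F_Y, both symmetric around a common center x*: f_X(x* + t) = f_X(x* − t) and f_Y(x* + t) = f_Y(x* − t) for all t ∈ ℝ. Then TVD(P_Q^{HD}, U) = TVD(Q_P^{HD}, U) = TVD(P, Q), where P_Q^{HD} is the law of min{F_X(Y), 1 − F_X(Y)} for Y ∼ Q, Q_P^{HD} is the law of min{F_Y(X), 1 − F_Y(X)} for X ∼ P, and U is the uniform distribution on [0, 1/2]. -/

import Mathlib

open MeasureTheory Set
open scoped ENNReal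

/-- The total variation distance between two measures on `ℝ`, computed via their
densities (Radon–Nikodym derivatives) with respect to Lebesgue measure:
`TVD(P,Q) = (1/2) ∫ |p(x) - q(x)| dx`. -/
noncomputable def TVD (μ ν : Measure ℝ) : ℝ :=
  (1 / 2) * ∫ x, |(μ.rnDeriv volume x).toReal - (ν.rnDeriv volume x).toReal|

namespace HDProof

variable {f : ℝ → ℝ}

/-- total lintegral is 1 -/
lemma lint_one (hprob : IsProbabilityMeasure (volume.withDensity fun x => ENNReal.ofReal (f x))) :
    ∫⁻ x, ENNReal.ofReal (f x) = 1 := by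
  have h := hprob.measure_univ
  rwa [withDensity_apply _ MeasurableSet.univ, Measure.restrict_univ] at h

lemma integrable_f (hfc : Continuous f) (hf0 : ∀ x, 0 ≤ f x)
    (hprob : IsProbabilityMeasure (volume.withDensity fun x => ENNReal.ofReal (f x))) :
    Integrable f := by
  have h := integrable_toReal_of_lintegral_ne_top
    (f := fun x => ENNReal.ofReal (f x))
    (hfc.measurable.ennreal_ofReal).aemeasurable (by rw [lint_one hprob]; simp)
  refine h.congr (Filter.Eventually.of_forall fun x => ?_)
  simp [ENNReal.toReal_ofReal (hf0 x)]

lemma meas_apply (hfc : Continuous f) (hf0 : ∀ x, 0 ≤ f x)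
    (hprob : IsProbabilityMeasure (volume.withDensity fun x => ENNReal.ofReal (f x)))
    {s : Set ℝ} (hs : MeasurableSet s) :
    (volume.withDensity fun x => ENNReal.ofReal (f x)) s = ENNReal.ofReal (∫ x in s, f x) := by
  rw [withDensity_apply _ hs,
    ← ofReal_integral_eq_lintegral_ofReal ((integrable_f hfc hf0 hprob).integrableOn)
      (Filter.Eventually.of_forall fun x => hf0 x)]

lemma integral_f_one (hfc : Continuous f) (hf0 : ∀ x, 0 ≤ f x)
    (hprob : IsProbabilityMeasure (volume.withDensity fun x => ENNReal.ofReal (f x))) :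
    ∫ x, f x = 1 := by
  have h := hprob.measure_univ
  rw [meas_apply hfc hf0 hprob MeasurableSet.univ] at h
  rw [Measure.restrict_univ] at h
  have h2 : ENNReal.ofReal (∫ x, f x) = ENNReal.ofReal 1 := by simpa using h
  exact (ENNReal.ofReal_eq_ofReal_iff (integral_nonneg hf0) one_pos.le).mp h2

section Fprops

variable (hfc : Continuous f) (hfpos : ∀ x, 0 < f x)
  (hprob : IsProbabilityMeasure (volume.withDensity fun x => ENNReal.ofReal (f x)))

include hfc hfpos hprob

private lemma hf0 : ∀ x, 0 ≤ f x := fun x => (hfpos x).le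
omit hfpos hprob

/-- the CDF -/
noncomputable def F (f : ℝ → ℝ) (x : ℝ) : ℝ := ∫ t in Iic x, f t

include hfpos hprob

lemma F_sub {a b : ℝ} (hab : a ≤ b) : F f b - F f a = ∫ t in Ioc a b, f t := by
  have hi := integrable_f hfc (hf0 hfc hfpos hprob) hprob
  have : F f b = F f a + ∫ t in Ioc a b, f t := by
    unfold F
    rw [← setIntegral_union (Iic_disjoint_Ioc le_rfl) measurableSet_Ioc
      hi.integrableOn hi.integrableOn, Iic_union_Ioc_eq_Iic hab]
  linarith

lemma F_strictMono : StrictMono (F f) := by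
  intro a b hab
  have h := F_sub hfc hfpos hprob hab.le
  have hpos : 0 < ∫ t in Ioc a b, f t := by
    rw [setIntegral_pos_iff_support_of_nonneg_ae
      (Filter.Eventually.of_forall fun x => (hfpos x).le)
      ((integrable_f hfc (hf0 hfc hfpos hprob) hprob).integrableOn)]
    have : Function.support f = univ := by
      ext x; simp [Function.mem_support, (hfpos x).ne']
    rw [this, univ_inter, Real.volume_Ioc]
    simp [hab]
  linarith

lemma F_continuous : Continuous (F f) := by
  have hi := integrable_f hfc (hf0 hfc hfpos hprob) hprob
  have key : ∀ x : ℝ, F f x = F f 0 + ∫ t in (0:ℝ)..x, f t := by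
    intro x
    rcases le_or_gt 0 x with h | h
    · rw [intervalIntegral.integral_of_le h]
      have := F_sub hfc hfpos hprob h
      linarith
    · rw [intervalIntegral.integral_of_ge h.le]
      have := F_sub hfc hfpos hprob h.le
      linarith
  have : Continuous fun x => F f 0 + ∫ t in (0:ℝ)..x, f t :=
    continuous_const.add (hi.continuous_primitive 0)
  exact this.congr fun x => (key x).symm

lemma F_pos (x : ℝ) : 0 < F f x := by
  have hi := integrable_f hfc (hf0 hfc hfpos hprob) hprob
  have h : 0 < ∫ t in Iic x, f t := by
    rw [setIntegral_pos_iff_support_of_nonneg_ae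
      (Filter.Eventually.of_forall fun y => (hfpos y).le) hi.integrableOn]
    have : Function.support f = univ := by
      ext y; simp [Function.mem_support, (hfpos y).ne']
    rw [this, univ_inter]
    simp
  exact h

lemma F_add_Ioi (x : ℝ) : F f x + ∫ t in Ioi x, f t = 1 := by
  have hi := integrable_f hfc (hf0 hfc hfpos hprob) hprob
  have : (∫ t in Iic x, f t) + ∫ t in Ioi x, f t = ∫ t, f t := by
    rw [← setIntegral_union (Iic_disjoint_Ioi le_rfl) measurableSet_Ioi
      hi.integrableOn hi.integrableOn, Iic_union_Ioi, setIntegral_univ]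
  rw [integral_f_one hfc (hf0 hfc hfpos hprob) hprob] at this
  exact this

lemma F_lt_one (x : ℝ) : F f x < 1 := by
  have h := F_add_Ioi hfc hfpos hprob x
  have hi := integrable_f hfc (hf0 hfc hfpos hprob) hprob
  have hpos : 0 < ∫ t in Ioi x, f t := by
    rw [setIntegral_pos_iff_support_of_nonneg_ae
      (Filter.Eventually.of_forall fun y => (hfpos y).le) hi.integrableOn]
    have : Function.support f = univ := by
      ext y; simp [Function.mem_support, (hfpos y).ne']
    rw [this, univ_inter]
    simp
  linarith

lemma F_meas_Iic (x : ℝ) :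
    (volume.withDensity fun y => ENNReal.ofReal (f y)) (Iic x) = ENNReal.ofReal (F f x) :=
  meas_apply hfc (hf0 hfc hfpos hprob) hprob measurableSet_Iic

lemma F_tendsto_atTop : Filter.Tendsto (F f) Filter.atTop (nhds 1) := by
  have h1 : Filter.Tendsto (fun x => (volume.withDensity fun y => ENNReal.ofReal (f y)) (Iic x))
      Filter.atTop (nhds 1) := by
    have := tendsto_measure_Iic_atTop (μ := volume.withDensity fun y => ENNReal.ofReal (f y))
    rwa [measure_univ] at this
  have h2 := (ENNReal.tendsto_toReal (by simp : (1:ℝ≥0∞) ≠ ⊤)).comp h1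
  simp only [ENNReal.toReal_one] at h2
  refine h2.congr fun x => ?_
  simp only [Function.comp_apply]
  rw [F_meas_Iic hfc hfpos hprob, ENNReal.toReal_ofReal (F_pos hfc hfpos hprob x).le]

lemma F_tendsto_atBot : Filter.Tendsto (F f) Filter.atBot (nhds 0) := by
  have h1 : Filter.Tendsto (fun x => (volume.withDensity fun y => ENNReal.ofReal (f y)) (Ici x))
      Filter.atBot (nhds 1) := by
    have := tendsto_measure_Ici_atBot (volume.withDensity fun y => ENNReal.ofReal (f y))
    rwa [measure_univ] at this
  have h2 := (ENNReal.tendsto_toReal (by simp : (1:ℝ≥0∞) ≠ ⊤)).comp h1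
  simp only [ENNReal.toReal_one] at h2
  have h3 : ∀ x : ℝ, ((volume.withDensity fun y => ENNReal.ofReal (f y)) (Ici x)).toReal
      = 1 - F f x := by
    intro x
    rw [meas_apply hfc (hf0 hfc hfpos hprob) hprob measurableSet_Ici,
      ENNReal.toReal_ofReal (integral_nonneg fun y => (hfpos y).le)]
    have h4 : ∫ t in Ici x, f t = ∫ t in Ioi x, f t :=
      setIntegral_congr_set (Ioi_ae_eq_Ici' (by simp)).symm
    have h5 := F_add_Ioi hfc hfpos hprob x
    linarith
  have h6 : Filter.Tendsto (fun x => 1 - (1 - F f x)) Filter.atBot (nhds 0) := by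
    have := Filter.Tendsto.const_sub (1:ℝ) (h2.congr fun x => by
      simp only [Function.comp_apply]; rw [h3 x])
    simpa using this
  refine h6.congr fun x => by ring

lemma F_surj {t : ℝ} (ht0 : 0 < t) (ht1 : t < 1) : ∃ y, F f y = t := by
  obtain ⟨a, ha⟩ := ((F_tendsto_atBot hfc hfpos hprob).eventually_lt_const ht0).exists
  obtain ⟨b, hb⟩ := ((F_tendsto_atTop hfc hfpos hprob).eventually_const_lt ht1).exists
  have := intermediate_value_univ a b (F_continuous hfc hfpos hprob)
  exact this ⟨ha.le, hb.le⟩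

end Fprops
section Reflect

variable (hfc : Continuous f) (hfpos : ∀ x, 0 < f x)
  (hprob : IsProbabilityMeasure (volume.withDensity fun x => ENNReal.ofReal (f x)))
  {c : ℝ} (hsym : ∀ t : ℝ, f (c + t) = f (c - t))

lemma r_mp (c : ℝ) : MeasurePreserving (fun x : ℝ => 2 * c - x) volume volume :=
  Measure.measurePreserving_sub_left volume (2 * c)

lemma r_emb (c : ℝ) : MeasurableEmbedding (fun x : ℝ => 2 * c - x) :=
  (MeasurableEquiv.subLeft (2 * c)).measurableEmbedding

include hsym

lemma f_refl (x : ℝ) : f (2 * c - x) = f x := by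
  have h1 : 2 * c - x = c + (c - x) := by ring
  have h2 : c - (c - x) = x := by ring
  rw [h1, hsym, h2]

include hfc hfpos hprob

lemma F_refl (x : ℝ) : F f (2 * c - x) = 1 - F f x := by
  have hset : Iic (2 * c - x) = (fun y : ℝ => 2 * c - y) ⁻¹' (Ici x) := by
    ext y; simp only [mem_Iic, mem_preimage, mem_Ici]; constructor <;> intro h <;> linarith
  have h1 : F f (2 * c - x) = ∫ y in (fun y : ℝ => 2 * c - y) ⁻¹' (Ici x), f y := by
    rw [F, hset]
  have h2 : ∫ y in (fun y : ℝ => 2 * c - y) ⁻¹' (Ici x), f y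
      = ∫ y in (fun y : ℝ => 2 * c - y) ⁻¹' (Ici x), f (2 * c - y) := by
    refine setIntegral_congr_fun ((measurable_const.sub measurable_id) measurableSet_Ici)
      fun y _ => (f_refl hsym y).symm
  have h3 := (r_mp c).setIntegral_preimage_emb (r_emb c) f (Ici x)
  have h4 : ∫ y in Ici x, f y = ∫ y in Ioi x, f y :=
    setIntegral_congr_set (Ioi_ae_eq_Ici' (by simp)).symm
  have h5 := F_add_Ioi hfc hfpos hprob x
  rw [h1, h2, h3, h4]; linarith

lemma F_half : F f c = 1 / 2 := by
  have := F_refl hfc hfpos hprob hsym c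
  have h : (2:ℝ) * c - c = c := by ring
  rw [h] at this; linarith

omit hfc hfpos hprob hsym

lemma refl_lintegral_split {Φ : ℝ → ℝ≥0∞} (hΦ : ∀ x, Φ (2 * c - x) = Φ x) :
    ∫⁻ x, Φ x = 2 * ∫⁻ x in Iio c, Φ x := by
  have hsplit := lintegral_add_compl Φ (measurableSet_Iic (a := c)) (μ := volume)
  have hc : (Iic c)ᶜ = Ioi c := by simp
  have hpre : (fun y : ℝ => 2 * c - y) ⁻¹' (Ioi c) = Iio c := by
    ext y; simp only [mem_preimage, mem_Ioi, mem_Iio]; constructor <;> intro h <;> linarith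
  have h1 : ∫⁻ x in Ioi c, Φ x = ∫⁻ x in Iio c, Φ x := by
    have := (r_mp c).setLIntegral_comp_preimage_emb (r_emb c) Φ (Ioi c)
    rw [hpre] at this
    rw [← this]
    refine lintegral_congr fun x => hΦ x
  have h2 : ∫⁻ x in Iic c, Φ x = ∫⁻ x in Iio c, Φ x :=
    (setLIntegral_congr (Iio_ae_eq_Iic' (by simp))).symm
  rw [hc, h1, h2] at hsplit
  rw [← hsplit, two_mul]

end Reflect

section Psi

variable (hfc : Continuous f) (hfpos : ∀ x, 0 < f x)
  (hprob : IsProbabilityMeasure (volume.withDensity fun x => ENNReal.ofReal (f x)))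

/-- a measurable left inverse of the CDF -/
noncomputable def psi (f : ℝ → ℝ) : ℝ → ℝ := Function.extend (F f) id fun _ => 0

include hfc hfpos hprob

lemma F_emb : MeasurableEmbedding (F f) :=
  (F_continuous hfc hfpos hprob).measurableEmbedding (F_strictMono hfc hfpos hprob).injective

lemma psi_meas : Measurable (psi f) :=
  (F_emb hfc hfpos hprob).measurable_extend measurable_id measurable_const

lemma psi_F (y : ℝ) : psi f (F f y) = y :=
  (F_strictMono hfc hfpos hprob).injective.extend_apply _ _ _

lemma F_psi {t : ℝ} (ht0 : 0 < t) (ht1 : t < 1) : F f (psi f t) = t := by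
  obtain ⟨y, hy⟩ := F_surj hfc hfpos hprob ht0 ht1
  rw [← hy, psi_F hfc hfpos hprob]

end Psi
section Subst

variable (hfc : Continuous f) (hfpos : ∀ x, 0 < f x)
  (hprob : IsProbabilityMeasure (volume.withDensity fun x => ENNReal.ofReal (f x)))
  {c : ℝ} (hsym : ∀ t : ℝ, f (c + t) = f (c - t))

include hfc hfpos hprob hsym

lemma map_F_eq :
    Measure.map (F f) ((volume.withDensity fun x => ENNReal.ofReal (f x)).restrict (Iio c))
      = volume.restrict (Ioo 0 (1 / 2)) := by
  set P := volume.withDensity fun x => ENNReal.ofReal (f x) with hPdef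
  have hFm : Measurable (F f) := (F_continuous hfc hfpos hprob).measurable
  have hfin : IsFiniteMeasure (Measure.map (F f) (P.restrict (Iio c))) := by
    constructor
    rw [Measure.map_apply hFm MeasurableSet.univ, preimage_univ, Measure.restrict_apply_univ]
    exact lt_of_le_of_lt (measure_mono (subset_univ _)) (measure_lt_top P univ)
  refine Measure.ext_of_Iic _ _ fun u => ?_
  rw [Measure.map_apply hFm measurableSet_Iic, Measure.restrict_apply' measurableSet_Iio,
    Measure.restrict_apply' measurableSet_Ioo]
  rcases le_or_gt u 0 with hu | hu
  · have h1 : F f ⁻¹' Iic u ∩ Iio c = ∅ := by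
      refine eq_empty_of_forall_notMem fun y hy => ?_
      have := hy.1
      simp only [mem_preimage, mem_Iic] at this
      exact absurd (lt_of_le_of_lt (this.trans hu) (F_pos hfc hfpos hprob y)) (lt_irrefl _)
    have h2 : Iic u ∩ Ioo 0 (1 / 2) = ∅ := by
      refine eq_empty_of_forall_notMem fun y hy => ?_
      rcases hy with ⟨hy1, hy2, _⟩
      simp only [mem_Iic] at hy1
      linarith
    rw [h1, h2]; simp
  · rcases lt_or_ge u (1 / 2) with hu2 | hu2
    · have hy0 : F f (psi f u) = u :=
        F_psi hfc hfpos hprob hu (lt_trans hu2 (by norm_num))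
      have hy0c : psi f u < c := by
        have : F f (psi f u) < F f c := by
          rw [hy0, F_half hfc hfpos hprob hsym]; exact hu2
        exact (F_strictMono hfc hfpos hprob).lt_iff_lt.mp this
      have h1 : F f ⁻¹' Iic u ∩ Iio c = Iic (psi f u) := by
        have hpre : F f ⁻¹' Iic u = Iic (psi f u) := by
          ext y
          simp only [mem_preimage, mem_Iic]
          have h := (F_strictMono hfc hfpos hprob).le_iff_le (a := y) (b := psi f u)
          rw [hy0] at h
          exact h
        rw [hpre, inter_eq_left]
        exact fun y hy => lt_of_le_of_lt hy hy0c
      have h2 : Iic u ∩ Ioo 0 (1 / 2) = Ioc 0 u := by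
        ext y
        simp only [mem_inter_iff, mem_Iic, mem_Ioo, mem_Ioc]
        constructor
        · rintro ⟨a, b, _⟩; exact ⟨b, a⟩
        · rintro ⟨a, b⟩; exact ⟨b, a, lt_of_le_of_lt b hu2⟩
      rw [h1, h2, F_meas_Iic hfc hfpos hprob, hy0, Real.volume_Ioc]
      norm_num
    · have h1 : F f ⁻¹' Iic u ∩ Iio c = Iio c := by
        rw [inter_eq_right]
        intro y hy
        simp only [mem_preimage, mem_Iic]
        have : F f y < F f c := (F_strictMono hfc hfpos hprob) hy
        rw [F_half hfc hfpos hprob hsym] at this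
        linarith
      have h2 : Iic u ∩ Ioo 0 (1 / 2) = Ioo 0 (1 / 2) := by
        rw [inter_eq_right]
        intro y hy
        simp only [mem_Iic]
        exact le_trans hy.2.le hu2
      have h3 : P (Iio c) = ENNReal.ofReal (1 / 2) := by
        rw [hPdef, meas_apply hfc (fun x => (hfpos x).le) hprob measurableSet_Iio]
        congr 1
        have h4 : ∫ t in Iio c, f t = ∫ t in Iic c, f t :=
          setIntegral_congr_set (Iio_ae_eq_Iic' (by simp))
        rw [h4]
        exact F_half hfc hfpos hprob hsym
      rw [h1, h2, h3, Real.volume_Ioo]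
      norm_num

lemma subst_lintegral (Φ : ℝ → ℝ≥0∞) (hΦ : Measurable Φ) :
    ∫⁻ u in Ioo 0 (1 / 2), Φ u
      = ∫⁻ y in Iio c, Φ (F f y) ∂(volume.withDensity fun x => ENNReal.ofReal (f x)) := by
  rw [← map_F_eq hfc hfpos hprob hsym,
    lintegral_map hΦ (F_continuous hfc hfpos hprob).measurable]

end Subst
lemma setlint {h : ℝ → ℝ} (hh : Integrable h) (h0 : ∀ x, 0 ≤ h x) {s : Set ℝ} :
    ∫⁻ x in s, ENNReal.ofReal (h x) = ENNReal.ofReal (∫ x in s, h x) :=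
  (ofReal_integral_eq_lintegral_ofReal hh.integrableOn
    (Filter.Eventually.of_forall fun x => h0 x)).symm

section MeasIci

variable (hfc : Continuous f) (hfpos : ∀ x, 0 < f x)
  (hprob : IsProbabilityMeasure (volume.withDensity fun x => ENNReal.ofReal (f x)))

include hfc hfpos hprob

lemma meas_Ici (x : ℝ) :
    (volume.withDensity fun y => ENNReal.ofReal (f y)) (Ici x)
      = ENNReal.ofReal (1 - F f x) := by
  rw [meas_apply hfc (fun y => (hfpos y).le) hprob measurableSet_Ici]
  congr 1
  have h4 : ∫ t in Ici x, f t = ∫ t in Ioi x, f t :=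
    setIntegral_congr_set (Ioi_ae_eq_Ici' (by simp)).symm
  have h5 := F_add_Ioi hfc hfpos hprob x
  linarith

lemma meas_Iio (x : ℝ) :
    (volume.withDensity fun y => ENNReal.ofReal (f y)) (Iio x)
      = ENNReal.ofReal (F f x) := by
  rw [meas_apply hfc (fun y => (hfpos y).le) hprob measurableSet_Iio]
  congr 1
  exact setIntegral_congr_set (Iio_ae_eq_Iic' (by simp))

end MeasIci

section Main

variable {q : ℝ → ℝ} (hfc : Continuous f) (hfpos : ∀ x, 0 < f x)
  (hprob : IsProbabilityMeasure (volume.withDensity fun x => ENNReal.ofReal (f x)))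
  (hqc : Continuous q) (hqpos : ∀ x, 0 < q x)
  (hqprob : IsProbabilityMeasure (volume.withDensity fun x => ENNReal.ofReal (q x)))
  {c : ℝ} (hsymf : ∀ t : ℝ, f (c + t) = f (c - t)) (hsymq : ∀ t : ℝ, q (c + t) = q (c - t))

/-- the density of the pushforward of `Q` under the halfspace-depth map -/
noncomputable def H (f q : ℝ → ℝ) : ℝ → ℝ≥0∞ :=
  (Ioo (0:ℝ) (1 / 2)).indicator fun u => ENNReal.ofReal (2 * q (psi f u) / f (psi f u))

include hfc hfpos hprob hqc

lemma phi_meas : Measurable fun u => ENNReal.ofReal (2 * q (psi f u) / f (psi f u)) := by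
  have hcont : Continuous fun y : ℝ => 2 * q y / f y :=
    (continuous_const.mul hqc).div hfc fun y => (hfpos y).ne'
  exact (hcont.measurable.comp (psi_meas hfc hfpos hprob)).ennreal_ofReal

lemma H_meas : Measurable (H f q) :=
  (phi_meas hfc hfpos hprob hqc).indicator measurableSet_Ioo

include hsymf

lemma withDensity_H_Iic (t : ℝ) :
    (volume.withDensity (H f q)) (Iic t)
      = ∫⁻ y in Iio c ∩ {y | F f y ≤ t}, ENNReal.ofReal (2 * q y) := by
  have hφm := phi_meas hfc hfpos hprob hqc
  have hΦm : Measurable ((Iic t).indicator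
      fun u => ENNReal.ofReal (2 * q (psi f u) / f (psi f u))) :=
    hφm.indicator measurableSet_Iic
  have hFset : MeasurableSet {y : ℝ | F f y ≤ t} :=
    (F_continuous hfc hfpos hprob).measurable measurableSet_Iic
  rw [withDensity_apply _ measurableSet_Iic]
  have step1 : ∫⁻ u in Iic t, H f q u
      = ∫⁻ u in Ioo (0:ℝ) (1 / 2), (Iic t).indicator
          (fun u => ENNReal.ofReal (2 * q (psi f u) / f (psi f u))) u := by
    rw [H, lintegral_indicator measurableSet_Ioo, lintegral_indicator measurableSet_Iic,
      Measure.restrict_restrict measurableSet_Ioo, Measure.restrict_restrict measurableSet_Iic,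
      inter_comm]
  rw [step1, subst_lintegral hfc hfpos hprob hsymf _ hΦm]
  have step2 : ∀ y : ℝ, (Iic t).indicator
      (fun u => ENNReal.ofReal (2 * q (psi f u) / f (psi f u))) (F f y)
      = {y : ℝ | F f y ≤ t}.indicator (fun y => ENNReal.ofReal (2 * q y / f y)) y := by
    intro y
    by_cases h : F f y ≤ t
    · rw [indicator_of_mem (show F f y ∈ Iic t from h),
        indicator_of_mem (show y ∈ {y : ℝ | F f y ≤ t} from h),
        psi_F hfc hfpos hprob y]
    · rw [indicator_of_notMem (show F f y ∉ Iic t from h),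
        indicator_of_notMem (show y ∉ {y : ℝ | F f y ≤ t} from h)]
  have hgm : Measurable fun y : ℝ => ENNReal.ofReal (2 * q y / f y) := by
    have hcont : Continuous fun y : ℝ => 2 * q y / f y :=
      (continuous_const.mul hqc).div hfc fun y => (hfpos y).ne'
    exact hcont.measurable.ennreal_ofReal
  rw [lintegral_congr step2, lintegral_indicator hFset,
    Measure.restrict_restrict hFset, inter_comm _ (Iio c),
    setLIntegral_withDensity_eq_setLIntegral_mul volume
      (hfc.measurable.ennreal_ofReal) hgm (measurableSet_Iio.inter hFset)]
  refine setLIntegral_congr_fun (measurableSet_Iio.inter hFset)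
    (fun y _ => ?_)
  simp only [Pi.mul_apply]
  rw [← ENNReal.ofReal_mul (hfpos y).le]
  congr 1
  field_simp
  exact mul_div_cancel_left₀ _ (hfpos y).ne'

include hqpos hqprob hsymq

lemma map_min_eq :
    Measure.map (fun y => min (F f y) (1 - F f y))
        (volume.withDensity fun x => ENNReal.ofReal (q x))
      = volume.withDensity (H f q) := by
  set Q := volume.withDensity fun x => ENNReal.ofReal (q x) with hQdef
  have hgc : Continuous fun y => min (F f y) (1 - F f y) :=
    (F_continuous hfc hfpos hprob).min (continuous_const.sub (F_continuous hfc hfpos hprob))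
  have hfin : IsFiniteMeasure (Measure.map (fun y => min (F f y) (1 - F f y)) Q) := by
    constructor
    rw [Measure.map_apply hgc.measurable MeasurableSet.univ, preimage_univ]
    exact measure_lt_top Q univ
  have hqint : Integrable (fun y => 2 * q y) :=
    (integrable_f hqc (fun x => (hqpos x).le) hqprob).const_mul 2
  refine Measure.ext_of_Iic _ _ fun t => ?_
  rw [Measure.map_apply hgc.measurable measurableSet_Iic,
    withDensity_H_Iic hfc hfpos hprob hqc hsymf t]
  rcases le_or_gt t 0 with ht | ht
  · have h1 : (fun y => min (F f y) (1 - F f y)) ⁻¹' Iic t = ∅ := by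
      refine eq_empty_of_forall_notMem fun y hy => ?_
      simp only [mem_preimage, mem_Iic, min_le_iff] at hy
      have h2 := F_pos hfc hfpos hprob y
      have h3 := F_lt_one hfc hfpos hprob y
      rcases hy with h | h <;> linarith
    have h2 : Iio c ∩ {y | F f y ≤ t} = ∅ := by
      refine eq_empty_of_forall_notMem fun y hy => ?_
      have h3 := hy.2
      simp only [mem_setOf_eq] at h3
      have := F_pos hfc hfpos hprob y
      linarith
    rw [h1, h2]
    simp
  · rcases lt_or_ge t (1 / 2) with ht2 | ht2
    · set y0 := psi f t with hy0def
      have hFy0 : F f y0 = t := F_psi hfc hfpos hprob ht (by linarith)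
      have hy0c : y0 < c := by
        refine (F_strictMono hfc hfpos hprob).lt_iff_lt.mp ?_
        rw [hFy0, F_half hfc hfpos hprob hsymf]
        exact ht2
      set y1 := 2 * c - y0 with hy1def
      have hy1c : c < y1 := by rw [hy1def]; linarith
      have hFy1 : F f y1 = 1 - t := by
        rw [hy1def, F_refl hfc hfpos hprob hsymf, hFy0]
      have hpre : (fun y => min (F f y) (1 - F f y)) ⁻¹' Iic t = Iic y0 ∪ Ici y1 := by
        ext y
        simp only [mem_preimage, mem_Iic, mem_union, mem_Ici, min_le_iff]
        constructor
        · rintro (h | h)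
          · have h' : F f y ≤ F f y0 := by rw [hFy0]; exact h
            exact Or.inl ((F_strictMono hfc hfpos hprob).le_iff_le.mp h')
          · have h' : F f y1 ≤ F f y := by rw [hFy1]; linarith
            exact Or.inr ((F_strictMono hfc hfpos hprob).le_iff_le.mp h')
        · rintro (h | h)
          · have h' := (F_strictMono hfc hfpos hprob).le_iff_le.mpr h
            rw [hFy0] at h'
            exact Or.inl h'
          · have h' := (F_strictMono hfc hfpos hprob).le_iff_le.mpr h
            rw [hFy1] at h'
            exact Or.inr (by linarith)
      have hdisj : Disjoint (Iic y0) (Ici y1) :=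
        Iic_disjoint_Ici.mpr (by intro h; exact absurd (lt_of_lt_of_le hy0c (le_trans hy1c.le h)) (lt_irrefl _))
      have hset : Iio c ∩ {y | F f y ≤ t} = Iic y0 := by
        have hpre2 : {y | F f y ≤ t} = Iic y0 := by
          ext y
          simp only [mem_setOf_eq, mem_Iic]
          have h := (F_strictMono hfc hfpos hprob).le_iff_le (a := y) (b := y0)
          rw [hFy0] at h
          exact h
        rw [hpre2]
        exact inter_eq_right.mpr fun y hy => lt_of_le_of_lt hy hy0c
      rw [hpre, measure_union hdisj measurableSet_Ici, hQdef,
        F_meas_Iic hqc hqpos hqprob, meas_Ici hqc hqpos hqprob, hset,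
        setlint hqint (fun x => mul_nonneg (by norm_num) (hqpos x).le)]
      have hGy1 : F q y1 = 1 - F q y0 := by
        rw [hy1def, F_refl hqc hqpos hqprob hsymq]
      have hint2 : ∫ y in Iic y0, 2 * q y = 2 * F q y0 := by
        rw [integral_const_mul]
        rfl
      rw [hGy1, hint2, show (1:ℝ) - (1 - F q y0) = F q y0 by ring,
        ← ENNReal.ofReal_add (F_pos hqc hqpos hqprob y0).le (F_pos hqc hqpos hqprob y0).le]
      congr 1
      ring
    · have hpre : (fun y => min (F f y) (1 - F f y)) ⁻¹' Iic t = univ := by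
        refine eq_univ_of_forall fun y => ?_
        simp only [mem_preimage, mem_Iic, min_le_iff]
        rcases le_total (F f y) (1 / 2) with h | h
        · exact Or.inl (le_trans h ht2)
        · exact Or.inr (by linarith)
      have hset : Iio c ∩ {y | F f y ≤ t} = Iio c := by
        rw [inter_eq_left]
        intro y hy
        simp only [mem_setOf_eq]
        have h := (F_strictMono hfc hfpos hprob) hy
        rw [F_half hfc hfpos hprob hsymf] at h
        linarith
      rw [hpre, hset, setlint hqint (fun x => mul_nonneg (by norm_num) (hqpos x).le)]
      have hint2 : ∫ y in Iio c, 2 * q y = 1 := by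
        rw [integral_const_mul,
          setIntegral_congr_set (Iio_ae_eq_Iic' (by simp))]
        have := F_half hqc hqpos hqprob hsymq
        rw [show (∫ t in Iic c, q t) = F q c from rfl, this]
        norm_num
      rw [hint2]
      simp [measure_univ]


lemma key :
    TVD (Measure.map (fun y => min (F f y) (1 - F f y))
          (volume.withDensity fun x => ENNReal.ofReal (q x)))
        ((2 : ℝ≥0∞) • volume.restrict (Icc (0:ℝ) (1 / 2)))
      = (1 / 2) * (∫⁻ x, ENNReal.ofReal |f x - q x|).toReal := by
  have hHm := H_meas hfc hfpos hprob hqc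
  have hKm : Measurable ((Icc (0:ℝ) (1/2)).indicator fun _ => (2:ℝ≥0∞)) :=
    measurable_const.indicator measurableSet_Icc
  rw [map_min_eq hfc hfpos hprob hqc hqpos hqprob hsymf hsymq]
  have hU : (2:ℝ≥0∞) • volume.restrict (Icc (0:ℝ) (1/2))
      = volume.withDensity ((Icc (0:ℝ) (1/2)).indicator fun _ => (2:ℝ≥0∞)) := by
    rw [withDensity_indicator measurableSet_Icc, withDensity_const]
  rw [hU]
  unfold TVD
  congr 1
  have hH := Measure.rnDeriv_withDensity volume hHm
  have hK := Measure.rnDeriv_withDensity volume hKm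
  have step4 : ∫ x, |((volume.withDensity (H f q)).rnDeriv volume x).toReal -
      (((volume.withDensity ((Icc (0:ℝ) (1/2)).indicator fun _ => (2:ℝ≥0∞))).rnDeriv
        volume) x).toReal|
      = ∫ x, |(H f q x).toReal -
          (((Icc (0:ℝ) (1/2)).indicator fun _ => (2:ℝ≥0∞)) x).toReal| := by
    refine integral_congr_ae ?_
    filter_upwards [hH, hK] with x h1 h2
    rw [h1, h2]
  rw [step4]
  have hmeas2 : Measurable fun x => |(H f q x).toReal -
      (((Icc (0:ℝ) (1/2)).indicator fun _ => (2:ℝ≥0∞)) x).toReal| :=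
    (hHm.ennreal_toReal.sub hKm.ennreal_toReal).abs
  rw [integral_eq_lintegral_of_nonneg_ae (Filter.Eventually.of_forall fun x => abs_nonneg _)
    hmeas2.aestronglyMeasurable]
  congr 1
  have hpair : volume ({0, (1/2:ℝ)} : Set ℝ) = 0 := by
    rw [show ({0, (1/2:ℝ)} : Set ℝ) = {(0:ℝ)} ∪ {(1/2:ℝ)} from rfl]
    exact measure_union_null (by simp) (by simp)
  have hae : ∀ᵐ x : ℝ, x ∉ ({0, (1/2:ℝ)} : Set ℝ) := by
    have hs : {a : ℝ | ¬ a ∉ ({0, (1/2:ℝ)} : Set ℝ)} = ({0, (1/2:ℝ)} : Set ℝ) := by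
      ext a; simp; tauto
    rw [ae_iff, hs]
    exact hpair
  have step6 : ∫⁻ x, ENNReal.ofReal |(H f q x).toReal -
      (((Icc (0:ℝ) (1/2)).indicator fun _ => (2:ℝ≥0∞)) x).toReal|
      = ∫⁻ x, (Ioo (0:ℝ) (1/2)).indicator
          (fun u => ENNReal.ofReal |2 * q (psi f u) / f (psi f u) - 2|) x := by
    refine lintegral_congr_ae ?_
    filter_upwards [hae] with x hx
    by_cases hxo : x ∈ Ioo (0:ℝ) (1/2)
    · have hxc : x ∈ Icc (0:ℝ) (1/2) := Ioo_subset_Icc_self hxo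
      rw [indicator_of_mem hxo, indicator_of_mem hxc, H, indicator_of_mem hxo,
        ENNReal.toReal_ofReal (div_nonneg (mul_nonneg (by norm_num) (hqpos _).le)
          (hfpos _).le)]
      norm_num
    · have hxc : x ∉ Icc (0:ℝ) (1/2) := by
        intro hxc
        have h0 : x ≠ 0 := fun h => hx (by simp [h])
        have h1 : x ≠ 1/2 := fun h => hx (by simp [h])
        exact hxo ⟨lt_of_le_of_ne hxc.1 (Ne.symm h0), lt_of_le_of_ne hxc.2 h1⟩
      rw [indicator_of_notMem hxo, indicator_of_notMem hxc, H, indicator_of_notMem hxo]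
      simp
  rw [step6, lintegral_indicator measurableSet_Ioo]
  have hΦm : Measurable fun u => ENNReal.ofReal |2 * q (psi f u) / f (psi f u) - 2| := by
    have hcont : Continuous fun y : ℝ => |2 * q y / f y - 2| :=
      (((continuous_const.mul hqc).div hfc fun y => (hfpos y).ne').sub continuous_const).abs
    exact (hcont.measurable.comp (psi_meas hfc hfpos hprob)).ennreal_ofReal
  rw [subst_lintegral hfc hfpos hprob hsymf _ hΦm]
  have step7 : ∫⁻ y in Iio c, ENNReal.ofReal |2 * q (psi f (F f y)) / f (psi f (F f y)) - 2|
        ∂(volume.withDensity fun x => ENNReal.ofReal (f x))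
      = ∫⁻ y in Iio c, ENNReal.ofReal |2 * q y / f y - 2|
        ∂(volume.withDensity fun x => ENNReal.ofReal (f x)) :=
    lintegral_congr fun y => by rw [psi_F hfc hfpos hprob y]
  rw [step7]
  have hgm2 : Measurable fun y : ℝ => ENNReal.ofReal |2 * q y / f y - 2| := by
    have hcont : Continuous fun y : ℝ => |2 * q y / f y - 2| :=
      (((continuous_const.mul hqc).div hfc fun y => (hfpos y).ne').sub continuous_const).abs
    exact hcont.measurable.ennreal_ofReal
  rw [setLIntegral_withDensity_eq_setLIntegral_mul volume hfc.measurable.ennreal_ofReal hgm2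
    measurableSet_Iio]
  have step8 : ∀ y : ℝ, ((fun x => ENNReal.ofReal (f x)) *
        fun y => ENNReal.ofReal |2 * q y / f y - 2|) y
      = 2 * ENNReal.ofReal |q y - f y| := by
    intro y
    simp only [Pi.mul_apply]
    rw [← ENNReal.ofReal_mul (hfpos y).le]
    have hne : f y ≠ 0 := (hfpos y).ne'
    have h1 : f y * (2 * q y / f y - 2) = 2 * (q y - f y) := by
      rw [mul_sub, mul_comm (f y) (2 * q y / f y), div_mul_cancel₀ (2 * q y) hne]
      ring
    have habs : f y * |2 * q y / f y - 2| = 2 * |q y - f y| := by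
      calc f y * |2 * q y / f y - 2| = |f y| * |2 * q y / f y - 2| := by
            rw [abs_of_nonneg (hfpos y).le]
        _ = |f y * (2 * q y / f y - 2)| := (abs_mul _ _).symm
        _ = |2 * (q y - f y)| := by rw [h1]
        _ = 2 * |q y - f y| := by rw [abs_mul, abs_two]
    rw [habs, ENNReal.ofReal_mul (by norm_num)]
    norm_num
  rw [lintegral_congr step8,
    lintegral_const_mul 2 (f := fun y => ENNReal.ofReal |q y - f y|) ((hqc.sub hfc).abs.measurable.ennreal_ofReal)]
  have hsplit := refl_lintegral_split (c := c)
    (Φ := fun y => ENNReal.ofReal |q y - f y|) (fun x => by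
      show ENNReal.ofReal |q (2 * c - x) - f (2 * c - x)| = ENNReal.ofReal |q x - f x|
      rw [f_refl (f := q) hsymq x, f_refl (f := f) hsymf x])
  rw [← hsplit]
  exact lintegral_congr fun x => by rw [abs_sub_comm]

lemma TVD_eq :
    TVD (volume.withDensity fun x => ENNReal.ofReal (f x))
        (volume.withDensity fun x => ENNReal.ofReal (q x))
      = (1 / 2) * (∫⁻ x, ENNReal.ofReal |f x - q x|).toReal := by
  unfold TVD
  congr 1
  have h1 := Measure.rnDeriv_withDensity volume hfc.measurable.ennreal_ofReal
  have h2 := Measure.rnDeriv_withDensity volume hqc.measurable.ennreal_ofReal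
  have step : ∫ x, |(((volume.withDensity fun x => ENNReal.ofReal (f x)).rnDeriv volume) x).toReal
        - (((volume.withDensity fun x => ENNReal.ofReal (q x)).rnDeriv volume) x).toReal|
      = ∫ x, |f x - q x| := by
    refine integral_congr_ae ?_
    filter_upwards [h1, h2] with x e1 e2
    rw [e1, e2, ENNReal.toReal_ofReal (hfpos x).le, ENNReal.toReal_ofReal (hqpos x).le]
  rw [step, integral_eq_lintegral_of_nonneg_ae (f := fun x => |f x - q x|) (Filter.Eventually.of_forall fun x => abs_nonneg _)
    (hfc.sub hqc).abs.measurable.aestronglyMeasurable]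

end Main
end HDProof

/-- Let `P, Q` have everywhere positive continuous densities `fX, fY` and CDFs `FX, FY`,
both symmetric around a common center `x*`. Then
`TVD(P_Q^{HD}, U) = TVD(Q_P^{HD}, U) = TVD(P, Q)`, where `P_Q^{HD}` is the law of
`min (FX Y) (1 - FX Y)` for `Y ~ Q`, `Q_P^{HD}` is the law of `min (FY X) (1 - FY X)`
for `X ~ P`, and `U` is the uniform distribution on `[0, 1/2]`. -/
theorem hd_induced_tvd_eq_of_symmetric_concentric
    (P Q : Measure ℝ) [IsProbabilityMeasure P] [IsProbabilityMeasure Q]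
    (fX fY : ℝ → ℝ) (hfXpos : ∀ x, 0 < fX x) (hfYpos : ∀ x, 0 < fY x)
    (hfXc : Continuous fX) (hfYc : Continuous fY)
    (hP : P = volume.withDensity (fun x => ENNReal.ofReal (fX x)))
    (hQ : Q = volume.withDensity (fun x => ENNReal.ofReal (fY x)))
    (FX FY : ℝ → ℝ)
    (hFX : ∀ x, FX x = (P (Iic x)).toReal)
    (hFY : ∀ x, FY x = (Q (Iic x)).toReal)
    (xstar : ℝ)
    (hsymX : ∀ t : ℝ, fX (xstar + t) = fX (xstar - t))
    (hsymY : ∀ t : ℝ, fY (xstar + t) = fY (xstar - t)) :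
    TVD (Measure.map (fun y => min (FX y) (1 - FX y)) Q)
        ((2 : ℝ≥0∞) • volume.restrict (Icc (0 : ℝ) (1 / 2))) = TVD P Q ∧
    TVD (Measure.map (fun x => min (FY x) (1 - FY x)) P)
        ((2 : ℝ≥0∞) • volume.restrict (Icc (0 : ℝ) (1 / 2))) = TVD P Q := by
  have hPp : IsProbabilityMeasure (volume.withDensity fun x => ENNReal.ofReal (fX x)) := by
    rw [← hP]; infer_instance
  have hQp : IsProbabilityMeasure (volume.withDensity fun x => ENNReal.ofReal (fY x)) := by
    rw [← hQ]; infer_instance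
  have hFXeq : FX = HDProof.F fX := funext fun x => by
    rw [hFX x, hP, HDProof.F_meas_Iic hfXc hfXpos hPp,
      ENNReal.toReal_ofReal (HDProof.F_pos hfXc hfXpos hPp x).le]
  have hFYeq : FY = HDProof.F fY := funext fun x => by
    rw [hFY x, hQ, HDProof.F_meas_Iic hfYc hfYpos hQp,
      ENNReal.toReal_ofReal (HDProof.F_pos hfYc hfYpos hQp x).le]
  have hTVD : TVD P Q = (1 / 2) * (∫⁻ x, ENNReal.ofReal |fX x - fY x|).toReal := by
    rw [hP, hQ]
    exact HDProof.TVD_eq hfXc hfXpos hPp hfYc hfYpos hQp hsymX hsymY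
  constructor
  · rw [hTVD, hFXeq, hQ, HDProof.key hfXc hfXpos hPp hfYc hfYpos hQp hsymX hsymY]
  · rw [hTVD, hFYeq, hP, HDProof.key hfYc hfYpos hQp hfXc hfXpos hPp hsymY hsymX]
    congr 2
    exact lintegral_congr fun x => by rw [abs_sub_comm]
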